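/- Let Y = P^1 × P^1 and let U be the universal extension 0 → O^{⊕2} → U → O(2,−1) → 0 defined by a basis of the 2-dimensional space Ext^1(O(2,−1), O). Then U is an exceptional vector bundle of rank 3, and (O, U) is a strong exceptional pair with Hom(O, U) = H^0(Y, U) two-dimensional and H^j(Y, U) = 0 for j > 0. -/

import Mathlib

open CategoryTheory CategoryTheory.Limits CategoryTheory.Pretriangulated

/-- Let `Y = P^1 × P^1` and let `U` be the universal extension
`0 → O^{⊕2} → U → O(2,−1) → 0` determined by a basis of the 2-dimensional space
`Ext^1(O(2,−1), O)`.  Then `U` is an exceptional vector bundle of rank 3, and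
`(O, U)` is a strong exceptional pair with `Hom(O, U) = H^0(Y, U)` two-dimensional
and `H^j(Y, U) = 0` for `j > 0`.

Formalization: `T = D^b(coh Y)`; `OB` stands for `O`, `OA` for `O(2,−1)`; both are
exceptional, with `Hom(O, O(2,−1)[l]) = 0` for all `l` and `Hom(O(2,−1), O[l]) = 0`
for `l ≠ 1`, while `e₁, e₂` form a basis of `Hom(O(2,−1), O[1]) = Ext^1(O(2,−1), O)`.
The universal extension `U` is encoded by a distinguished triangle
`O ⊞ O → U → O(2,−1) --δ--> (O ⊞ O)[1]` whose connecting map `δ` has components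
`e₁, e₂`.  The rank is encoded by an additive function `rk` on distinguished
triangles with `rk O = rk O(2,−1) = 1`. -/
theorem universal_extension_is_exceptional
    (k : Type) [Field k]
    (T : Type) [Category T] [Preadditive T] [HasZeroObject T] [HasShift T ℤ]
    [∀ n : ℤ, (shiftFunctor T n).Additive] [Pretriangulated T]
    [CategoryTheory.Linear k T] [HasBinaryBiproducts T]
    (hfinite : ∀ X Y : T, FiniteDimensional k (X ⟶ Y))
    (OB OA : T)
    -- `(O(2,-1), O)` is an exceptional pair:
    (hBend : ∀ f : OB ⟶ OB, ∃! c : k, f = c • 𝟙 OB)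
    (hBext : ∀ l : ℤ, l ≠ 0 → ∀ f : OB ⟶ OB⟦l⟧, f = 0)
    (hAend : ∀ f : OA ⟶ OA, ∃! c : k, f = c • 𝟙 OA)
    (hAext : ∀ l : ℤ, l ≠ 0 → ∀ f : OA ⟶ OA⟦l⟧, f = 0)
    (hBA : ∀ l : ℤ, ∀ f : OB ⟶ OA⟦l⟧, f = 0)
    (hAB : ∀ l : ℤ, l ≠ 1 → ∀ f : OA ⟶ OB⟦l⟧, f = 0)
    -- `e₁, e₂` is a basis of the 2-dimensional space `Ext^1(O(2,-1), O)`: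
    (e₁ e₂ : OA ⟶ OB⟦(1 : ℤ)⟧)
    (hbasis : ∀ f : OA ⟶ OB⟦(1 : ℤ)⟧, ∃! c : k × k, f = c.1 • e₁ + c.2 • e₂)
    -- the universal extension `0 → O^{⊕2} → U → O(2,-1) → 0`:
    (U : T) (ι : OB ⊞ OB ⟶ U) (p : U ⟶ OA) (δ : OA ⟶ (OB ⊞ OB)⟦(1 : ℤ)⟧)
    (htri : Triangle.mk ι p δ ∈ distTriang T)
    (hδ₁ : δ ≫ (shiftFunctor T (1 : ℤ)).map biprod.fst = e₁)
    (hδ₂ : δ ≫ (shiftFunctor T (1 : ℤ)).map biprod.snd = e₂)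
    -- the rank function:
    (rk : T → ℤ)
    (hrk : ∀ Tr : Triangle T, (Tr ∈ distTriang T) → rk Tr.obj₂ = rk Tr.obj₁ + rk Tr.obj₃)
    (hrkB : rk OB = 1) (hrkA : rk OA = 1) :
    -- `U` is exceptional of rank 3:
    (∀ f : U ⟶ U, ∃! c : k, f = c • 𝟙 U) ∧
    (∀ l : ℤ, l ≠ 0 → ∀ f : U ⟶ U⟦l⟧, f = 0) ∧
    rk U = 3 ∧
    -- `(O, U)` is a strong exceptional pair with `Hom(O, U)` two-dimensional:
    (∀ l : ℤ, ∀ f : U ⟶ OB⟦l⟧, f = 0) ∧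
    (∀ l : ℤ, l ≠ 0 → ∀ f : OB ⟶ U⟦l⟧, f = 0) ∧
    Module.finrank k (OB ⟶ U) = 2 := by
  -- linear independence of `e₁, e₂`
  have hind : ∀ c₁ c₂ : k, c₁ • e₁ + c₂ • e₂ = 0 → c₁ = 0 ∧ c₂ = 0 := by
    intro c₁ c₂ h
    obtain ⟨c, -, hu⟩ := hbasis 0
    have h1 : (c₁, c₂) = c := hu (c₁, c₂) h.symm
    have h2 : ((0 : k), (0 : k)) = c := hu (0, 0) (by simp)
    rw [← h2] at h1
    exact ⟨((Prod.mk.injEq _ _ _ _).mp h1).1, ((Prod.mk.injEq _ _ _ _).mp h1).2⟩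
  have he₁ : e₁ ≠ 0 := by
    intro h
    exact one_ne_zero (hind 1 0 (by rw [h]; simp)).1
  have he₂ : e₂ ≠ 0 := by
    intro h
    exact one_ne_zero (hind 0 1 (by rw [h]; simp)).2
  have hBid : 𝟙 OB ≠ 0 := by
    intro h
    apply he₁
    have h2 : 𝟙 ((shiftFunctor T (1 : ℤ)).obj OB) = 0 := by
      rw [← (shiftFunctor T (1 : ℤ)).map_id, h, Functor.map_zero]
    rw [← Category.comp_id e₁, h2, Limits.comp_zero]
  -- unshifted `Hom(OA, OB)` and `Hom(OB, OA)` vanish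
  have hAB0 : ∀ g : OA ⟶ OB, g = 0 := by
    intro g
    have h := hAB 0 (by norm_num) (g ≫ (shiftFunctorZero T ℤ).inv.app OB)
    have h2 := congrArg (fun t => t ≫ (shiftFunctorZero T ℤ).hom.app OB) h
    simpa using h2
  have hBA0 : ∀ g : OB ⟶ OA, g = 0 := by
    intro g
    have h := hBA 0 (g ≫ (shiftFunctorZero T ℤ).inv.app OA)
    have h2 := congrArg (fun t => t ≫ (shiftFunctorZero T ℤ).hom.app OA) h
    simpa using h2
  -- compositions in the triangle vanish
  have hpδ : p ≫ δ = 0 := comp_distTriang_mor_zero₂₃ _ htri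
  have hδSι : δ ≫ (shiftFunctor T (1 : ℤ)).map ι = 0 := by
    have h := comp_distTriang_mor_zero₂₃ _ (rot_of_distTriang _ htri)
    dsimp only [Triangle.rotate, Triangle.mk] at h
    rw [Preadditive.comp_neg] at h
    exact neg_eq_zero.mp h
  -- the key computation: composing with shifts of scalar endomorphisms
  have hε : ∀ (x : OA ⟶ OB⟦(1 : ℤ)⟧) (c : k),
      (shiftFunctor T (-1 : ℤ)).map (x ≫ (shiftFunctor T (1 : ℤ)).map (c • 𝟙 OB)) ≫
        (shiftFunctorCompIsoId T (1 : ℤ) (-1) (by omega)).hom.app OB =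
      c • ((shiftFunctor T (-1 : ℤ)).map x ≫
        (shiftFunctorCompIsoId T (1 : ℤ) (-1) (by omega)).hom.app OB) := by
    intro x c
    rw [Functor.map_comp, Category.assoc]
    have hnat := (shiftFunctorCompIsoId T (1 : ℤ) (-1) (by omega)).hom.naturality (c • 𝟙 OB)
    rw [Functor.comp_map] at hnat
    rw [hnat]
    simp
  have key : ∀ (x : OA ⟶ OB⟦(1 : ℤ)⟧),
      (shiftFunctorCompIsoId T (-1 : ℤ) 1 (by omega)).inv.app OA ≫
        (shiftFunctor T (1 : ℤ)).map ((shiftFunctor T (-1 : ℤ)).map x ≫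
          (shiftFunctorCompIsoId T (1 : ℤ) (-1) (by omega)).hom.app OB) = x := by
    intro x
    rw [Functor.map_comp]
    rw [shift_shiftFunctorCompIsoId_hom_app]
    have hnat := (shiftFunctorCompIsoId T (-1 : ℤ) 1 (by omega)).inv.naturality x
    rw [Functor.comp_map] at hnat
    rw [← Category.assoc, ← hnat]
    simp
  have hM : ∀ (x : OA ⟶ OB⟦(1 : ℤ)⟧),
      (shiftFunctor T (1 : ℤ)).map ((shiftFunctor T (-1 : ℤ)).map x ≫
        (shiftFunctorCompIsoId T (1 : ℤ) (-1) (by omega)).hom.app OB) =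
      (shiftFunctorCompIsoId T (-1 : ℤ) 1 (by omega)).hom.app OA ≫ x := by
    intro x
    have h3 := congrArg
      (fun t => (shiftFunctorCompIsoId T (-1 : ℤ) 1 (by omega)).hom.app OA ≫ t) (key x)
    simpa using h3
  -- the crux : linear independence survives composition with shifted scalars
  have crux : ∀ c₁ c₂ : k,
      e₁ ≫ (shiftFunctor T (1 : ℤ)).map (c₁ • 𝟙 OB) +
        e₂ ≫ (shiftFunctor T (1 : ℤ)).map (c₂ • 𝟙 OB) = 0 →
      c₁ = 0 ∧ c₂ = 0 := by
    intro c₁ c₂ hsum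
    have h1 : c₁ • ((shiftFunctor T (-1 : ℤ)).map e₁ ≫
          (shiftFunctorCompIsoId T (1 : ℤ) (-1) (by omega)).hom.app OB) +
        c₂ • ((shiftFunctor T (-1 : ℤ)).map e₂ ≫
          (shiftFunctorCompIsoId T (1 : ℤ) (-1) (by omega)).hom.app OB) = 0 := by
      have h2 := congrArg (fun t => (shiftFunctor T (-1 : ℤ)).map t ≫
        (shiftFunctorCompIsoId T (1 : ℤ) (-1) (by omega)).hom.app OB) hsum
      simp only [Functor.map_add, Preadditive.add_comp, Functor.map_zero,
        Limits.zero_comp] at h2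
      rw [hε, hε] at h2
      exact h2
    have hstep : ∀ (c : k) (e : OA ⟶ OB⟦(1 : ℤ)⟧),
        (shiftFunctorCompIsoId T (-1 : ℤ) 1 (by omega)).inv.app OA ≫
          (shiftFunctor T (1 : ℤ)).map (c • ((shiftFunctor T (-1 : ℤ)).map e ≫
            (shiftFunctorCompIsoId T (1 : ℤ) (-1) (by omega)).hom.app OB)) =
        ((shiftFunctorCompIsoId T (-1 : ℤ) 1 (by omega)).inv.app OA ≫
          (shiftFunctor T (1 : ℤ)).map (c • 𝟙 ((shiftFunctor T (-1 : ℤ)).obj OA)) ≫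
          (shiftFunctorCompIsoId T (-1 : ℤ) 1 (by omega)).hom.app OA) ≫ e := by
      intro c e
      have hsm : c • ((shiftFunctor T (-1 : ℤ)).map e ≫
            (shiftFunctorCompIsoId T (1 : ℤ) (-1) (by omega)).hom.app OB) =
          (c • 𝟙 ((shiftFunctor T (-1 : ℤ)).obj OA)) ≫ ((shiftFunctor T (-1 : ℤ)).map e ≫
            (shiftFunctorCompIsoId T (1 : ℤ) (-1) (by omega)).hom.app OB) := by
        rw [Linear.smul_comp, Category.id_comp]
      rw [hsm, Functor.map_comp, hM e]
      simp only [Category.assoc]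
    obtain ⟨ρ₁, hρ₁, -⟩ := hAend ((shiftFunctorCompIsoId T (-1 : ℤ) 1 (by omega)).inv.app OA ≫
        (shiftFunctor T (1 : ℤ)).map (c₁ • 𝟙 ((shiftFunctor T (-1 : ℤ)).obj OA)) ≫
        (shiftFunctorCompIsoId T (-1 : ℤ) 1 (by omega)).hom.app OA)
    obtain ⟨ρ₂, hρ₂, -⟩ := hAend ((shiftFunctorCompIsoId T (-1 : ℤ) 1 (by omega)).inv.app OA ≫
        (shiftFunctor T (1 : ℤ)).map (c₂ • 𝟙 ((shiftFunctor T (-1 : ℤ)).obj OA)) ≫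
        (shiftFunctorCompIsoId T (-1 : ℤ) 1 (by omega)).hom.app OA)
    have h3 : ρ₁ • e₁ + ρ₂ • e₂ = 0 := by
      have h4 := congrArg (fun t => (shiftFunctorCompIsoId T (-1 : ℤ) 1 (by omega)).inv.app OA ≫
        (shiftFunctor T (1 : ℤ)).map t) h1
      simp only [Functor.map_add, Preadditive.comp_add, Functor.map_zero,
        Limits.comp_zero] at h4
      rw [hstep c₁ e₁, hstep c₂ e₂, hρ₁, hρ₂] at h4
      simpa using h4
    obtain ⟨hρ10, hρ20⟩ := hind ρ₁ ρ₂ h3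
    have final : ∀ (c : k) (e : OA ⟶ OB⟦(1 : ℤ)⟧), e ≠ 0 →
        ((shiftFunctorCompIsoId T (-1 : ℤ) 1 (by omega)).inv.app OA ≫
          (shiftFunctor T (1 : ℤ)).map (c • 𝟙 ((shiftFunctor T (-1 : ℤ)).obj OA)) ≫
          (shiftFunctorCompIsoId T (-1 : ℤ) 1 (by omega)).hom.app OA) = 0 → c = 0 := by
      intro c e hene hw
      have hS : (shiftFunctor T (1 : ℤ)).map (c • 𝟙 ((shiftFunctor T (-1 : ℤ)).obj OA)) = 0 := by
        have h5 := congrArg (fun t => (shiftFunctorCompIsoId T (-1 : ℤ) 1 (by omega)).hom.app OA ≫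
          t ≫ (shiftFunctorCompIsoId T (-1 : ℤ) 1 (by omega)).inv.app OA) hw
        simpa using h5
      by_contra hc
      apply hene
      have h7 : (shiftFunctor T (-1 : ℤ)).map (e ≫ (shiftFunctor T (1 : ℤ)).map (c • 𝟙 OB)) ≫
          (shiftFunctorCompIsoId T (1 : ℤ) (-1) (by omega)).hom.app OB =
          (c • 𝟙 ((shiftFunctor T (-1 : ℤ)).obj OA)) ≫ ((shiftFunctor T (-1 : ℤ)).map e ≫
            (shiftFunctorCompIsoId T (1 : ℤ) (-1) (by omega)).hom.app OB) := by
        rw [hε e c, Linear.smul_comp, Category.id_comp]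
      have h8 := congrArg (fun t => (shiftFunctorCompIsoId T (-1 : ℤ) 1 (by omega)).inv.app OA ≫
        (shiftFunctor T (1 : ℤ)).map t) h7
      simp only at h8
      rw [key (e ≫ (shiftFunctor T (1 : ℤ)).map (c • 𝟙 OB))] at h8
      rw [Functor.map_comp, hS, Limits.zero_comp, Limits.comp_zero] at h8
      haveI : IsIso (c • 𝟙 OB) :=
        ⟨⟨c⁻¹ • 𝟙 OB, by simp [smul_smul, mul_inv_cancel₀ hc, inv_mul_cancel₀ hc],
          by simp [smul_smul, mul_inv_cancel₀ hc, inv_mul_cancel₀ hc]⟩⟩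
      have h9 := congrArg
        (fun t => t ≫ CategoryTheory.inv ((shiftFunctor T (1 : ℤ)).map (c • 𝟙 OB))) h8
      simpa using h9
    exact ⟨final c₁ e₁ he₁ (by rw [hρ₁, hρ10, zero_smul]),
      final c₂ e₂ he₂ (by rw [hρ₂, hρ20, zero_smul])⟩
  -- injectivity of `(· ≫ ι)` on `Hom(OB, OB ⊞ OB)`
  have hinj : ∀ x : OB ⟶ OB ⊞ OB, x ≫ ι = 0 → x = 0 := by
    intro x hx
    obtain ⟨g, hg⟩ := Triangle.coyoneda_exact₂ _ (inv_rot_of_distTriang _ htri) x hx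
    rw [hg, hBA (-1) g]
    exact Limits.zero_comp
  have hι1 : biprod.inl ≫ ι ≠ 0 := by
    intro h
    have h2 := hinj biprod.inl h
    apply hBid
    rw [← biprod.inl_fst (X := OB) (Y := OB), h2, Limits.zero_comp]
  have h1U : 𝟙 U ≠ 0 := by
    intro h
    apply hι1
    rw [← Category.comp_id (biprod.inl ≫ ι), h, Limits.comp_zero]
  -- `Hom(U, OB) = 0`
  have hUB0 : ∀ f : U ⟶ OB, f = 0 := by
    intro f
    obtain ⟨c₁, hc₁, -⟩ := hBend (biprod.inl ≫ ι ≫ f)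
    obtain ⟨c₂, hc₂, -⟩ := hBend (biprod.inr≫ ι ≫ f)
    have hdec : ι ≫ f = biprod.fst ≫ (c₁ • 𝟙 OB) + biprod.snd ≫ (c₂ • 𝟙 OB) := by
      apply biprod.hom_ext'
      · simp [hc₁]
      · simp [hc₂]
    have hz : δ ≫ (shiftFunctor T (1 : ℤ)).map (ι ≫ f) = 0 := by
      rw [Functor.map_comp, ← Category.assoc, hδSι, Limits.zero_comp]
    have key2 : e₁ ≫ (shiftFunctor T (1 : ℤ)).map (c₁ • 𝟙 OB) +
        e₂ ≫ (shiftFunctor T (1 : ℤ)).map (c₂ • 𝟙 OB) =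
        δ ≫ (shiftFunctor T (1 : ℤ)).map (ι ≫ f) := by
      rw [hdec, ← hδ₁, ← hδ₂, Functor.map_add, Functor.map_comp, Functor.map_comp,
        Preadditive.comp_add]
      simp only [Category.assoc]
    obtain ⟨hc10, hc20⟩ := crux c₁ c₂ (key2.trans hz)
    have hif : ι ≫ f = 0 := by rw [hdec, hc10, hc20]; simp
    obtain ⟨g, hg⟩ := Triangle.yoneda_exact₂ _ htri f hif
    rw [hg, hAB0 g]
    exact Limits.comp_zero
  -- `Hom(U, OB⟦l⟧) = 0` for all `l`
  have hUB : ∀ l : ℤ, ∀ f : U ⟶ OB⟦l⟧, f = 0 := by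
    intro l f
    by_cases hl : l = 0
    · subst hl
      have h0 : f ≫ (shiftFunctorZero T ℤ).hom.app OB = 0 := hUB0 _
      have h2 := congrArg (fun t => t ≫ (shiftFunctorZero T ℤ).inv.app OB) h0
      simpa using h2
    · have hif : ι ≫ f = 0 := by
        apply biprod.hom_ext'
        · rw [Limits.comp_zero]; exact hBext l hl _
        · rw [Limits.comp_zero]; exact hBext l hl _
      obtain ⟨g, hg⟩ := Triangle.yoneda_exact₂ _ htri f hif
      by_cases hl1 : l = 1
      · subst hl1
        obtain ⟨c, hc, -⟩ := hbasis g
        have hgd : g = δ ≫ (c.1 • (shiftFunctor T (1 : ℤ)).map biprod.fst +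
            c.2 • (shiftFunctor T (1 : ℤ)).map biprod.snd) := by
          rw [hc, ← hδ₁, ← hδ₂]
          simp [Preadditive.comp_add, Linear.comp_smul]
          rfl
        have hg' : f = p ≫ g := hg
        rw [hg', hgd, ← Category.assoc, hpδ, Limits.zero_comp]
      · rw [hg, hAB l hl1 g]
        exact Limits.comp_zero
  -- transfer lemma for shifts
  have htrans : ∀ (l : ℤ) (Z W : T) (x : (shiftFunctor T (-l)).obj Z ⟶ W),
      (shiftFunctorCompIsoId T (-l) l (by omega)).inv.app Z ≫ (shiftFunctor T l).map x = 0 →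
      x = 0 := by
    intro l Z W x hx
    have h2 : (shiftFunctor T l).map x = 0 := by
      have h3 := congrArg
        (fun t => (shiftFunctorCompIsoId T (-l) l (by omega)).hom.app Z ≫ t) hx
      simpa using h3
    apply (shiftFunctor T l).map_injective
    rw [h2, Functor.map_zero]
  -- `Hom(OB, U⟦l⟧) = 0` for `l ≠ 0`
  have hBU : ∀ l : ℤ, l ≠ 0 → ∀ f : OB ⟶ U⟦l⟧, f = 0 := by
    intro l hl f
    have hy : ∀ y : (shiftFunctor T (-l)).obj OB ⟶ U, y = 0 := by
      intro y
      have hyp : y ≫ p = 0 := htrans l OB OA _ (hBA l _)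
      obtain ⟨x, hx⟩ : ∃ x : (shiftFunctor T (-l)).obj OB ⟶ OB ⊞ OB, y = x ≫ ι :=
        Triangle.coyoneda_exact₂ _ htri y hyp
      have hx1 : x ≫ biprod.fst = 0 := htrans l OB OB _ (hBext l hl _)
      have hx2 : x ≫ biprod.snd = 0 := htrans l OB OB _ (hBext l hl _)
      have hx0 : x = 0 := by
        apply biprod.hom_ext <;> simp [hx1, hx2]
      rw [hx, hx0, Limits.zero_comp]
    have h0 : (shiftFunctor T (-l)).map f ≫
        (shiftFunctorCompIsoId T l (-l) (add_neg_cancel l)).hom.app U = 0 := hy _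
    have h1 : (shiftFunctor T (-l)).map f = 0 := by
      have h2 := congrArg
        (fun t => t ≫ (shiftFunctorCompIsoId T l (-l) (add_neg_cancel l)).inv.app U) h0
      simpa using h2
    apply (shiftFunctor T (-l)).map_injective
    rw [h1, Functor.map_zero]
  -- `Hom(U, U⟦l⟧) = 0` for `l ≠ 0`
  have hUU : ∀ l : ℤ, l ≠ 0 → ∀ f : U ⟶ U⟦l⟧, f = 0 := by
    intro l hl f
    have hif : ι ≫ f = 0 := by
      apply biprod.hom_ext'
      · rw [Limits.comp_zero]; exact hBU l hl _
      · rw [Limits.comp_zero]; exact hBU l hl _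
    obtain ⟨g, hg⟩ := Triangle.yoneda_exact₂ _ htri f hif
    by_cases hl1 : l = 1
    · subst hl1
      have hT2 := rot_of_distTriang _ (rot_of_distTriang _ htri)
      obtain ⟨x, hx⟩ : ∃ x : OA ⟶ (OB ⊞ OB)⟦(1 : ℤ)⟧, g = x ≫ (-((shiftFunctor T (1 : ℤ)).map ι)) :=
        Triangle.coyoneda_exact₃ _ hT2 g (hAext 1 one_ne_zero _)
      have hg' : f = p ≫ g := hg
      have hx' : g = x ≫ (-((shiftFunctor T (1 : ℤ)).map ι)) := hx
      obtain ⟨a, ha, -⟩ := hbasis (x ≫ (shiftFunctor T (1 : ℤ)).map biprod.fst)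
      obtain ⟨b, hb, -⟩ := hbasis (x ≫ (shiftFunctor T (1 : ℤ)).map biprod.snd)
      have hfac : ∀ cc : k × k, cc.1 • e₁ + cc.2 • e₂ =
          δ ≫ (cc.1 • (shiftFunctor T (1 : ℤ)).map biprod.fst +
            cc.2 • (shiftFunctor T (1 : ℤ)).map biprod.snd) := by
        intro cc
        rw [← hδ₁, ← hδ₂]
        simp [Preadditive.comp_add, Linear.comp_smul]
      have hid : (shiftFunctor T (1 : ℤ)).map (biprod.fst : OB ⊞ OB ⟶ OB) ≫
            (shiftFunctor T (1 : ℤ)).map biprod.inl +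
          (shiftFunctor T (1 : ℤ)).map (biprod.snd : OB ⊞ OB ⟶ OB) ≫
            (shiftFunctor T (1 : ℤ)).map biprod.inr =
          𝟙 ((shiftFunctor T (1 : ℤ)).obj (OB ⊞ OB)) := by
        rw [← Functor.map_comp, ← Functor.map_comp, ← Functor.map_add, biprod.total,
          CategoryTheory.Functor.map_id]
      have hxι : x ≫ (shiftFunctor T (1 : ℤ)).map ι =
          (x ≫ (shiftFunctor T (1 : ℤ)).map biprod.fst) ≫
            ((shiftFunctor T (1 : ℤ)).map biprod.inl ≫ (shiftFunctor T (1 : ℤ)).map ι) +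
          (x ≫ (shiftFunctor T (1 : ℤ)).map biprod.snd) ≫
            ((shiftFunctor T (1 : ℤ)).map biprod.inr ≫ (shiftFunctor T (1 : ℤ)).map ι) := by
        conv_lhs => rw [← Category.id_comp ((shiftFunctor T (1 : ℤ)).map ι), ← hid]
        simp [Preadditive.add_comp, Preadditive.comp_add, Category.assoc]
      rw [hg', hx']
      simp only [Preadditive.comp_neg, neg_eq_zero]
      rw [hxι, ha, hfac a, hb, hfac b]
      simp [Preadditive.comp_add, Preadditive.add_comp, Category.assoc, reassoc_of% hpδ]
    · have hg2 : (shiftFunctor T (-l)).map g ≫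
          (shiftFunctorCompIsoId T l (-l) (add_neg_cancel l)).hom.app U = 0 := by
        have hyp : ((shiftFunctor T (-l)).map g ≫
            (shiftFunctorCompIsoId T l (-l) (add_neg_cancel l)).hom.app U) ≫ p = 0 :=
          htrans l OA OA _ (hAext l hl _)
        obtain ⟨x, hx⟩ : ∃ x : (shiftFunctor T (-l)).obj OA ⟶ OB ⊞ OB, _ = x ≫ ι :=
          Triangle.coyoneda_exact₂ _ htri _ hyp
        have hx1 : x ≫ biprod.fst = 0 := htrans l OA OB _ (hAB l hl1 _)
        have hx2 : x ≫ biprod.snd = 0 := htrans l OA OB _ (hAB l hl1 _)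
        have hx0 : x = 0 := by
          apply biprod.hom_ext <;> simp [hx1, hx2]
        rw [hx, hx0]
        exact Limits.zero_comp
      have h1 : (shiftFunctor T (-l)).map g = 0 := by
        have h2 := congrArg
          (fun t => t ≫ (shiftFunctorCompIsoId T l (-l) (add_neg_cancel l)).inv.app U) hg2
        simpa using h2
      have hg0 : g = 0 := by
        apply (shiftFunctor T (-l)).map_injective
        rw [h1, Functor.map_zero]
      rw [hg, hg0]
      exact Limits.comp_zero
  -- `End(U) = k`
  have hEndU : ∀ f : U ⟶ U, ∃! c : k, f = c • 𝟙 U := by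
    intro f
    have hq : ι ≫ f ≫ p = 0 := by
      apply biprod.hom_ext'
      · rw [Limits.comp_zero]; exact hBA0 _
      · rw [Limits.comp_zero]; exact hBA0 _
    obtain ⟨g, hgq⟩ : ∃ g : OA ⟶ OA, f ≫ p = p ≫ g := Triangle.yoneda_exact₂ _ htri (f ≫ p) hq
    obtain ⟨c, hc, -⟩ := hAend g
    have hf'p : (f - c • 𝟙 U) ≫ p = 0 := by
      rw [Preadditive.sub_comp, hgq, hc]
      simp
    obtain ⟨v, hv⟩ : ∃ v : U ⟶ OB ⊞ OB, f - c • 𝟙 U = v ≫ ι :=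
      Triangle.coyoneda_exact₂ _ htri (f - c • 𝟙 U) hf'p
    have hv1 : v ≫ biprod.fst = 0 := hUB0 _
    have hv2 : v ≫ biprod.snd = 0 := hUB0 _
    have hv0 : v = 0 := by
      apply biprod.hom_ext <;> simp [hv1, hv2]
    have hf : f = c • 𝟙 U := by
      have h0 : f - c • 𝟙 U = 0 := by rw [hv, hv0, Limits.zero_comp]
      exact sub_eq_zero.mp h0
    refine ⟨c, hf, ?_⟩
    intro c' hc'
    by_contra hne
    apply h1U
    have h0 : (c' - c) • 𝟙 U = 0 := by rw [sub_smul, ← hc', ← hf, sub_self]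
    calc 𝟙 U = (c' - c)⁻¹ • ((c' - c) • 𝟙 U) := by
          rw [smul_smul, inv_mul_cancel₀ (sub_ne_zero.mpr hne), one_smul]
      _ = 0 := by rw [h0, smul_zero]
  -- the rank computation
  have hrkBB : rk (OB ⊞ OB) = 2 := by
    have h := hrk _ (binaryBiproductTriangle_distinguished OB OB)
    dsimp only [binaryBiproductTriangle, Triangle.mk] at h
    rw [hrkB] at h
    omega
  have hrkU : rk U = 3 := by
    have h := hrk _ htri
    dsimp only [Triangle.mk] at h
    rw [hrkBB, hrkA] at h
    omega
  -- the dimension computation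
  have hfr : Module.finrank k (OB ⟶ U) = 2 := by
    haveI := hfinite OB OB
    let ek : k ≃ₗ[k] (OB ⟶ OB) := LinearEquiv.ofBijective
      { toFun := fun c => c • 𝟙 OB
        map_add' := fun a b => add_smul a b (𝟙 OB)
        map_smul' := fun a b => by simp [smul_smul] }
      (by
        constructor
        · intro a b hab
          simp only [LinearMap.coe_mk, AddHom.coe_mk] at hab
          by_contra hne
          apply hBid
          have h0 : (a - b) • 𝟙 OB = 0 := by rw [sub_smul, hab, sub_self]
          calc 𝟙 OB = (a - b)⁻¹ • ((a - b) • 𝟙 OB) := by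
                rw [smul_smul, inv_mul_cancel₀ (sub_ne_zero.mpr hne), one_smul]
            _ = 0 := by rw [h0, smul_zero]
        · intro y
          obtain ⟨c, hcy, -⟩ := hBend y
          exact ⟨c, hcy.symm⟩)
    let e2 : (OB ⟶ OB ⊞ OB) ≃ₗ[k] (OB ⟶ OB) × (OB ⟶ OB) :=
      { toFun := fun x => (x ≫ biprod.fst, x ≫ biprod.snd)
        map_add' := fun a b => by simp [Preadditive.add_comp]
        map_smul' := fun a b => by simp
        invFun := fun z => biprod.lift z.1 z.2
        left_inv := fun x => by apply biprod.hom_ext <;> simp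
        right_inv := fun z => by simp }
    let eU : (OB ⟶ OB ⊞ OB) ≃ₗ[k] (OB ⟶ U) := LinearEquiv.ofBijective
      { toFun := fun x => x ≫ ι
        map_add' := fun a b => Preadditive.add_comp _ _ _ _ _ _
        map_smul' := fun a b => by simp }
      (by
        constructor
        · intro a b hab
          simp only [LinearMap.coe_mk, AddHom.coe_mk] at hab
          have h0 : (a - b) ≫ ι = 0 := by rw [Preadditive.sub_comp, hab, sub_self]
          exact sub_eq_zero.mp (hinj _ h0)
        · intro y
          have hyp : y ≫ p = 0 := hBA0 _
          obtain ⟨x, hx⟩ : ∃ x : OB ⟶ OB ⊞ OB, y = x ≫ ι := Triangle.coyoneda_exact₂ _ htri y hyp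
          exact ⟨x, hx.symm⟩)
    have hfin := LinearEquiv.finrank_eq (eU.symm.trans (e2.trans (ek.symm.prodCongr ek.symm)))
    rw [hfin, Module.finrank_prod, Module.finrank_self]
  exact ⟨hEndU, hUU, hrkU, hUB, hBU, hfr⟩
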